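/- Let s₀ < s₁ < ⋯ < s_k be integers, I_m = [0, 2^{s_m}], and define I*_k = I_k and I*_{m−1} = ⟨I_{m−1}, I*_m⟩ for m = k, k−1, …, 1. Then I*_0 ⊂ I*_1 ⊂ ⋯ ⊂ I*_k, and |J ∩ I*_{m−1}|/|J| = 1/2 for every m ∈ {1,…,k} and every dyadic interval J (i.e. an interval of the form [j·2^p, (j+1)·2^p] with j, p ∈ ℤ) contained in I*_m whose length belongs to (2^{s_{m−1}}, 2^{s_m}]; in particular |I*_m ∩ I*_{m−1}|/|I*_m| = 1/2 for every m ∈ {1,…,k}. -/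

import Mathlib

open MeasureTheory Set
open scoped ENNReal

noncomputable section

/-- The set of left endpoints of the component intervals of `I*_{k-i}`, where the sets
`I*_m` are obtained from `I*_k = [0, 2^{s_k}]` by repeatedly applying the operation
`⟨·,·⟩`: at each step, each component interval `[a, a + 2^{s_{m}}]` is replaced by the union
of its odd-indexed (1-based) subintervals `[a + 2t·2^{s_{m-1}}, a + (2t+1)·2^{s_{m-1}}]`,
`0 ≤ t < 2^{s_m - s_{m-1} - 1}`, of length `2^{s_{m-1}}`. -/
def leftEnds (s : ℕ → ℤ) (k : ℕ) : ℕ → Set ℝ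
  | 0 => {0}
  | i + 1 =>
      ⋃ a ∈ leftEnds s k i,
        (fun t : ℕ => a + 2 * t * (2:ℝ) ^ s (k - i - 1)) ''
          {t : ℕ | t < 2 ^ (s (k - i) - s (k - i - 1) - 1).toNat}

/-- The set `I*_m` of Lemma 2: `I*_k = I_k = [0, 2^{s_k}]` and
`I*_{m-1} = ⟨I_{m-1}, I*_m⟩` for `m = k, k-1, …, 1`. -/
def Istar (s : ℕ → ℤ) (k m : ℕ) : Set ℝ :=
  ⋃ a ∈ leftEnds s k (k - m), Set.Icc a (a + (2:ℝ) ^ s m)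

/-! ### Auxiliary material -/

/-- The union over `n : ℤ` of the intervals `[2n·2^q, (2n+1)·2^q]`. -/
def Hset (q : ℤ) : Set ℝ :=
  ⋃ n : ℤ, Set.Icc (2 * (n:ℝ) * (2:ℝ) ^ q) ((2 * (n:ℝ) + 1) * (2:ℝ) ^ q)

lemma c_pos (q : ℤ) : (0:ℝ) < (2:ℝ) ^ q := zpow_pos (by norm_num) q

lemma pow_split' {q p : ℤ} (h : q ≤ p) :
    (2:ℝ) ^ p = 2 ^ ((p - q).toNat) * (2:ℝ) ^ q := by
  rw [← zpow_natCast (2:ℝ) ((p - q).toNat), ← zpow_add₀ (by norm_num : (2:ℝ) ≠ 0)]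
  congr 1
  omega

lemma Icc_disj {a b a' b' : ℝ} (h : b < a') : Disjoint (Set.Icc a b) (Set.Icc a' b') := by
  rw [Set.disjoint_left]
  rintro x ⟨_, h2⟩ ⟨h3, _⟩
  linarith

lemma Hset_eq (q : ℤ) :
    Hset q = ⋃ n : ℤ, Set.Icc (((2*n : ℤ):ℝ) * (2:ℝ)^q) (((2*n+1 : ℤ):ℝ) * (2:ℝ)^q) := by
  unfold Hset
  refine Set.iUnion_congr fun n => ?_
  congr 1 <;> push_cast <;> ring

lemma cast_mul_le {c : ℝ} (hc : 0 < c) {z w : ℤ} (h : z ≤ w) : (z:ℝ) * c ≤ (w:ℝ) * c :=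
  mul_le_mul_of_nonneg_right (Int.cast_le.mpr h) hc.le

lemma cast_mul_le_iff {c : ℝ} (hc : 0 < c) {z w : ℤ} : (z:ℝ) * c ≤ (w:ℝ) * c ↔ z ≤ w := by
  rw [mul_le_mul_iff_of_pos_right hc, Int.cast_le]

lemma volC (q p : ℤ) (h : q < p) (j : ℤ) :
    volume (Set.Icc ((j:ℝ) * (2:ℝ) ^ p) (((j:ℝ) + 1) * (2:ℝ) ^ p) ∩ Hset q)
      = ENNReal.ofReal ((2:ℝ) ^ p) / 2 := by
  set c : ℝ := (2:ℝ) ^ q with hc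
  have hcpos : (0:ℝ) < c := c_pos q
  set D : ℕ := (p - q).toNat with hD
  have hD1 : 1 ≤ D := by omega
  have hpq : (2:ℝ) ^ p = 2 ^ D * c := pow_split' h.le
  set E : ℤ := 2 ^ D with hE
  set P : ℤ := ((2 ^ (D - 1) : ℕ) : ℤ) with hP
  have hPD : P.toNat = 2 ^ (D - 1) := by rw [hP]; exact Int.toNat_natCast _
  have hEP : E = 2 * P := by
    rw [hE, hP]
    push_cast
    conv_lhs => rw [show D = (D-1)+1 by omega]
    ring
  have hPpos : 0 < P := by rw [hP]; positivity
  have hEcast : ((E:ℝ)) = 2 ^ D := by rw [hE]; push_cast; ring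
  set e : ℤ := j * E with he
  have hjP : e = 2 * (j * P) := by rw [he, hEP]; ring
  have hA : (j:ℝ) * (2:ℝ) ^ p = (e:ℝ) * c := by
    rw [hpq, he, hE]; push_cast; ring
  have hB : ((j:ℝ) + 1) * (2:ℝ) ^ p = ((e + E : ℤ):ℝ) * c := by
    rw [hpq, he, hE]; push_cast; ring
  have key : Set.Icc ((j:ℝ) * (2:ℝ) ^ p) (((j:ℝ) + 1) * (2:ℝ) ^ p) ∩ Hset q
      = (⋃ t ∈ Finset.range P.toNat,
          Set.Icc (((e + 2*t : ℤ):ℝ) * c) (((e + 2*t + 1 : ℤ):ℝ) * c))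
        ∪ {((j:ℝ) + 1) * (2:ℝ) ^ p} := by
    rw [hA, hB, Hset_eq]
    ext x
    constructor
    · rintro ⟨⟨hx1, hx2⟩, hH⟩
      rw [Set.mem_iUnion] at hH
      obtain ⟨l, hl1, hl2⟩ := hH
      have hi1 : e ≤ 2 * l + 1 :=
        (cast_mul_le_iff hcpos).1 (le_trans hx1 hl2)
      have hi2 : 2 * l ≤ e + E :=
        (cast_mul_le_iff hcpos).1 (le_trans hl1 hx2)
      by_cases hcase : 2 * l = e + E
      · right
        rw [Set.mem_singleton_iff]
        have h2l : ((2*l : ℤ):ℝ) * c = ((e + E : ℤ):ℝ) * c := by rw [hcase]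
        exact le_antisymm hx2 (h2l ▸ hl1)
      · left
        set t : ℕ := (l - j * P).toNat with ht
        have htz : (t : ℤ) = l - j * P := Int.toNat_of_nonneg (by omega)
        have htlt : (t : ℤ) < P := by omega
        have htltn : t < P.toNat := by omega
        simp only [Set.mem_iUnion, Finset.mem_range]
        refine ⟨t, htltn, ?_, ?_⟩
        · exact le_trans (cast_mul_le hcpos (show e + 2*(t:ℤ) ≤ 2*l by omega)) hl1
        · exact le_trans hl2 (cast_mul_le hcpos (show 2*l+1 ≤ e + 2*(t:ℤ)+1 by omega))
    · intro hx
      rcases hx with hx | hx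
      · simp only [Set.mem_iUnion, Finset.mem_range] at hx
        obtain ⟨t, htlt, hx1, hx2⟩ := hx
        have htP : (t:ℤ) < P := by omega
        refine ⟨⟨le_trans (cast_mul_le hcpos (show e ≤ e + 2*(t:ℤ) by omega)) hx1,
                 le_trans hx2 (cast_mul_le hcpos (show e + 2*(t:ℤ) + 1 ≤ e + E by omega))⟩, ?_⟩
        rw [Set.mem_iUnion]
        exact ⟨j * P + t, by rw [show 2*(j*P+t) = e + 2*t by omega]; exact hx1,
               by rw [show 2*(j*P+t)+1 = e + 2*t+1 by omega]; exact hx2⟩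
      · rw [Set.mem_singleton_iff] at hx
        subst hx
        refine ⟨⟨cast_mul_le hcpos (show e ≤ e + E by omega), le_refl _⟩, ?_⟩
        rw [Set.mem_iUnion]
        exact ⟨j * P + P, by rw [show 2*(j*P+P) = e + E by omega],
               by rw [show 2*(j*P+P)+1 = e + E + 1 by omega];
                  exact cast_mul_le hcpos (by omega)⟩
  rw [key]
  have hnull : volume ((⋃ t ∈ Finset.range P.toNat,
          Set.Icc (((e + 2*t : ℤ):ℝ) * c) (((e + 2*t + 1 : ℤ):ℝ) * c))
        ∪ {((j:ℝ) + 1) * (2:ℝ) ^ p})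
      = volume (⋃ t ∈ Finset.range P.toNat,
          Set.Icc (((e + 2*t : ℤ):ℝ) * c) (((e + 2*t + 1 : ℤ):ℝ) * c)) := by
    refine le_antisymm ?_ (measure_mono Set.subset_union_left)
    calc volume _ ≤ _ + volume {((j:ℝ) + 1) * (2:ℝ) ^ p} := measure_union_le _ _
      _ = _ := by rw [measure_singleton, add_zero]
  rw [hnull]
  rw [measure_biUnion_finset ?hd ?hm]
  case hd =>
    intro t ht t' ht' hne
    rcases lt_or_gt_of_ne hne with hlt | hlt
    · exact Icc_disj (by
        apply mul_lt_mul_of_pos_right _ hcpos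
        exact_mod_cast (by omega : (e + 2*(t:ℤ) + 1) < e + 2*(t':ℤ)))
    · exact (Icc_disj (by
        apply mul_lt_mul_of_pos_right _ hcpos
        exact_mod_cast (by omega : (e + 2*(t':ℤ) + 1) < e + 2*(t:ℤ)))).symm
  case hm => exact fun t _ => measurableSet_Icc
  have hvol : ∀ t : ℕ, volume (Set.Icc (((e + 2*t : ℤ):ℝ) * c) (((e + 2*t + 1 : ℤ):ℝ) * c))
      = ENNReal.ofReal c := by
    intro t
    rw [Real.volume_Icc]
    congr 1
    push_cast
    ring
  rw [Finset.sum_congr rfl (fun t _ => hvol t), Finset.sum_const, Finset.card_range]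
  rw [hpq, ENNReal.ofReal_mul (by positivity), ENNReal.ofReal_pow (by norm_num),
    ENNReal.ofReal_ofNat, nsmul_eq_mul]
  rw [ENNReal.eq_div_iff (by norm_num) (by norm_num)]
  have h2 : (2:ℝ≥0∞) ^ D = 2 ^ (D - 1) * 2 := by
    conv_lhs => rw [show D = (D-1)+1 by omega]
    ring
  rw [hPD, h2]
  push_cast
  ring

lemma leftEnds_succ (s : ℕ → ℤ) (k i : ℕ) :
    leftEnds s k (i + 1) =
      ⋃ a ∈ leftEnds s k i,
        (fun t : ℕ => a + 2 * t * (2:ℝ) ^ s (k - i - 1)) ''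
          {t : ℕ | t < 2 ^ (s (k - i) - s (k - i - 1) - 1).toNat} := rfl

lemma leftEnds_spec (s : ℕ → ℤ) (k : ℕ) (hs : ∀ m, m < k → s m < s (m + 1)) :
    ∀ i, i ≤ k → ∃ T : Finset ℕ,
      leftEnds s k i = (fun n : ℕ => 2 * (n:ℝ) * (2:ℝ) ^ (s (k - i))) '' ↑T := by
  intro i
  induction i with
  | zero =>
      intro _
      refine ⟨{0}, ?_⟩
      simp [leftEnds]
  | succ i ih =>
      intro hik
      obtain ⟨T, hT⟩ := ih (by omega)
      have hlt : s (k - i - 1) < s (k - i) := by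
        have h1 := hs (k - i - 1) (by omega)
        rwa [show k - i - 1 + 1 = k - i by omega] at h1
      set d : ℕ := (s (k - i) - s (k - i - 1) - 1).toNat with hd
      have hqd : (2:ℝ) ^ (s (k - i)) = 2 ^ (d + 1) * (2:ℝ) ^ (s (k - i - 1)) := by
        rw [pow_split' hlt.le]
        congr 2
        omega
      have harith : ∀ n t : ℕ,
          2 * ((n * 2 ^ (d + 1) + t : ℕ) : ℝ) * (2:ℝ) ^ (s (k - i - 1))
            = 2 * (n:ℝ) * (2:ℝ) ^ (s (k - i)) + 2 * (t:ℝ) * (2:ℝ) ^ (s (k - i - 1)) := by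
        intro n t
        rw [hqd]
        push_cast
        ring
      refine ⟨T.biUnion (fun n => (Finset.range (2 ^ d)).image (fun t => n * 2 ^ (d + 1) + t)), ?_⟩
      rw [leftEnds_succ, hT]
      ext x
      simp only [Set.mem_iUnion, Set.mem_image, Set.mem_setOf_eq, Finset.coe_biUnion,
        Finset.coe_image, Finset.mem_coe, Finset.mem_biUnion, Finset.mem_image,
        Finset.mem_range, exists_prop, exists_exists_and_eq_and]
      constructor
      · rintro ⟨n, hn, t, ht, rfl⟩
        exact ⟨n * 2 ^ (d + 1) + t, ⟨n, hn, t, ht, rfl⟩, harith n t⟩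
      · rintro ⟨m', ⟨n, hn, t, ht, rfl⟩, rfl⟩
        exact ⟨n, hn, t, ht, (harith n t).symm⟩

lemma leftEnds_finite (s : ℕ → ℤ) (k : ℕ) (hs : ∀ m, m < k → s m < s (m + 1))
    {i : ℕ} (hik : i ≤ k) : (leftEnds s k i).Finite := by
  obtain ⟨T, hT⟩ := leftEnds_spec s k hs i hik
  rw [hT]
  exact (T.finite_toSet).image _

lemma Istar_meas (s : ℕ → ℤ) (k : ℕ) (hs : ∀ m, m < k → s m < s (m + 1))
    {m : ℕ} (hmk : m ≤ k) : MeasurableSet (Istar s k m) :=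
  Set.Finite.measurableSet_biUnion (leftEnds_finite s k hs (by omega))
    (fun _ _ => measurableSet_Icc)

lemma IstarMono (s : ℕ → ℤ) (k : ℕ) (hs : ∀ m, m < k → s m < s (m + 1))
    (m : ℕ) (hmk : m < k) : Istar s k m ⊆ Istar s k (m + 1) := by
  have hkm : k - m = (k - (m+1)) + 1 := by omega
  have h1 : k - (k - (m+1)) - 1 = m := by omega
  have h2 : k - (k - (m+1)) = m + 1 := by omega
  intro x hx
  rw [Istar, hkm, leftEnds_succ, h1, h2] at hx
  simp only [Set.mem_iUnion, Set.mem_image, Set.mem_setOf_eq] at hx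
  obtain ⟨a, ⟨b, hb, t, ht, rfl⟩, hxI⟩ := hx
  rw [Istar]
  simp only [Set.mem_iUnion]
  refine ⟨b, hb, ?_, ?_⟩
  · have := hxI.1
    have h0 : (0:ℝ) ≤ 2 * (t:ℝ) * (2:ℝ) ^ (s m) := by positivity
    linarith
  · have hxu := hxI.2
    set D : ℕ := (s (m+1) - s m).toNat with hD
    have hD1 : 1 ≤ D := by
      have := hs m hmk
      omega
    have hdm : (s (m+1) - s m - 1).toNat = D - 1 := by omega
    rw [hdm] at ht
    have hnat : 2 * t + 1 ≤ 2 ^ D := by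
      have h2D : 2 ^ D = 2 * 2 ^ (D - 1) := by
        conv_lhs => rw [show D = (D-1)+1 by omega]
        ring
      omega
    have hcast : 2 * (t:ℝ) + 1 ≤ (2:ℝ) ^ D := by exact_mod_cast hnat
    have hpq : (2:ℝ) ^ (s (m+1)) = 2 ^ D * (2:ℝ) ^ (s m) := pow_split' (by omega)
    have hsm : (0:ℝ) < (2:ℝ) ^ (s m) := c_pos _
    rw [hpq]
    nlinarith
  done

lemma Istar_subset_Hset (s : ℕ → ℤ) (k : ℕ) (hs : ∀ m, m < k → s m < s (m + 1))
    (m : ℕ) (hm1 : 1 ≤ m) (hmk : m ≤ k) :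
    Istar s k (m - 1) ⊆ Hset (s (m - 1)) := by
  obtain ⟨T, hT⟩ := leftEnds_spec s k hs (k - (m-1)) (by omega)
  have hidx : k - (k - (m-1)) = m - 1 := by omega
  rw [hidx] at hT
  intro x hx
  rw [Istar, hT] at hx
  simp only [Set.mem_iUnion, Set.mem_image, Finset.mem_coe] at hx
  obtain ⟨a, ⟨n, hn, rfl⟩, hxI⟩ := hx
  rw [Hset, Set.mem_iUnion]
  refine ⟨(n:ℤ), ?_, ?_⟩
  · have : 2 * ((n:ℤ):ℝ) * (2:ℝ) ^ (s (m-1)) = 2 * (n:ℝ) * (2:ℝ) ^ (s (m-1)) := by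
      push_cast; ring
    rw [this]
    exact hxI.1
  · have : (2 * ((n:ℤ):ℝ) + 1) * (2:ℝ) ^ (s (m-1))
        = 2 * (n:ℝ) * (2:ℝ) ^ (s (m-1)) + (2:ℝ) ^ (s (m-1)) := by
      push_cast; ring
    rw [this]
    exact hxI.2

lemma Istar_inter_Hset (s : ℕ → ℤ) (k : ℕ) (hs : ∀ m, m < k → s m < s (m + 1))
    (m : ℕ) (hm1 : 1 ≤ m) (hmk : m ≤ k) :
    Istar s k m ∩ Hset (s (m - 1)) ⊆
      Istar s k (m - 1) ∪ ((fun a : ℝ => a + (2:ℝ) ^ s m) '' leftEnds s k (k - m)) := by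
  obtain ⟨T, hT⟩ := leftEnds_spec s k hs (k - m) (by omega)
  have hidx : k - (k - m) = m := by omega
  rw [hidx] at hT
  rintro x ⟨hx1, hx2⟩
  rw [Istar] at hx1
  simp only [Set.mem_iUnion] at hx1
  obtain ⟨a, ha, hxa⟩ := hx1
  have han : ∃ n : ℕ, a = 2 * (n:ℝ) * (2:ℝ) ^ (s m) := by
    rw [hT] at ha
    obtain ⟨n, _, rfl⟩ := ha
    exact ⟨n, rfl⟩
  obtain ⟨n, rfl⟩ := han
  set c : ℝ := (2:ℝ) ^ (s (m-1)) with hcdef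
  have hcpos : (0:ℝ) < c := c_pos _
  have hltq : s (m - 1) < s m := by
    have h1 := hs (m-1) (by omega)
    rwa [show m - 1 + 1 = m by omega] at h1
  set D : ℕ := (s m - s (m-1)).toNat with hD
  have hD1 : 1 ≤ D := by omega
  have hpq : (2:ℝ) ^ (s m) = 2 ^ D * c := pow_split' hltq.le
  set E : ℤ := 2 ^ D with hE
  set P : ℤ := ((2 ^ (D - 1) : ℕ) : ℤ) with hP
  have hPD : P.toNat = 2 ^ (D - 1) := by rw [hP]; exact Int.toNat_natCast _
  have hEP : E = 2 * P := by
    rw [hE, hP]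
    push_cast
    conv_lhs => rw [show D = (D-1)+1 by omega]
    ring
  set e : ℤ := 2 * (n:ℤ) * E with he
  have h2ne : 2 * (n:ℤ) * E = 2 * ((n:ℤ) * E) := by ring
  have heA : 2 * (n:ℝ) * (2:ℝ) ^ (s m) = ((e:ℤ):ℝ) * c := by
    rw [hpq, he, hE]; push_cast; ring
  have heB : 2 * (n:ℝ) * (2:ℝ) ^ (s m) + (2:ℝ) ^ (s m) = ((e + E : ℤ):ℝ) * c := by
    rw [hpq, he, hE]; push_cast; ring
  rw [Hset_eq, Set.mem_iUnion] at hx2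
  obtain ⟨l, hl1, hl2⟩ := hx2
  have hi1 : e ≤ 2 * l + 1 :=
    (cast_mul_le_iff hcpos).1 (le_trans (heA ▸ hxa.1) hl2)
  have hi2 : 2 * l ≤ e + E :=
    (cast_mul_le_iff hcpos).1 (le_trans hl1 (heB ▸ hxa.2))
  by_cases hcase : 2 * l = e + E
  · right
    refine ⟨2 * (n:ℝ) * (2:ℝ) ^ (s m), ha, ?_⟩
    have h2l : ((2*l : ℤ):ℝ) * c = ((e + E : ℤ):ℝ) * c := by rw [hcase]
    have hxeq : x = 2 * (n:ℝ) * (2:ℝ) ^ (s m) + (2:ℝ) ^ (s m) := by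
      refine le_antisymm hxa.2 ?_
      rw [heB, ← h2l]
      exact hl1
    exact hxeq.symm
  · left
    set t : ℕ := (l - (n:ℤ) * E).toNat with ht
    have htz : (t : ℤ) = l - (n:ℤ) * E := Int.toNat_of_nonneg (by omega)
    have htP : (t : ℤ) < P := by omega
    have htn : t < 2 ^ (D - 1) := by omega
    have hkm1 : k - (m - 1) = (k - m) + 1 := by omega
    have hj1 : k - (k - m) - 1 = m - 1 := by omega
    rw [Istar, hkm1, leftEnds_succ, hj1, hidx]
    simp only [Set.mem_iUnion, Set.mem_image, Set.mem_setOf_eq]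
    have hdm : (s m - s (m-1) - 1).toNat = D - 1 := by omega
    refine ⟨2 * (n:ℝ) * (2:ℝ) ^ (s m) + 2 * (t:ℝ) * c,
      ⟨2 * (n:ℝ) * (2:ℝ) ^ (s m), ha, t, by rw [hdm]; exact htn, rfl⟩, ?_, ?_⟩
    · have heq1 : 2 * (n:ℝ) * (2:ℝ) ^ (s m) + 2 * (t:ℝ) * c = ((2*l : ℤ):ℝ) * c := by
        rw [heA]
        have : e + 2 * (t:ℤ) = 2 * l := by omega
        have hc2 : ((e:ℤ):ℝ) + 2 * (t:ℝ) = ((2*l : ℤ):ℝ) := by exact_mod_cast this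
        linear_combination c * hc2
      rw [heq1]
      exact hl1
    · have heq2 : 2 * (n:ℝ) * (2:ℝ) ^ (s m) + 2 * (t:ℝ) * c + c = ((2*l+1 : ℤ):ℝ) * c := by
        rw [heA]
        have : e + 2 * (t:ℤ) + 1 = 2 * l + 1 := by omega
        have hc2 : ((e:ℤ):ℝ) + 2 * (t:ℝ) + 1 = ((2*l+1 : ℤ):ℝ) := by exact_mod_cast this
        linear_combination c * hc2
      rw [heq2]
      exact hl2

lemma part2L (s : ℕ → ℤ) (k : ℕ) (hs : ∀ m, m < k → s m < s (m + 1))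
    (m : ℕ) (hm1 : 1 ≤ m) (hmk : m ≤ k) (j p : ℤ)
    (hJ : Set.Icc ((j : ℝ) * (2:ℝ) ^ p) (((j : ℝ) + 1) * (2:ℝ) ^ p) ⊆ Istar s k m)
    (hp : (2:ℝ) ^ p ∈ Set.Ioc ((2:ℝ) ^ s (m - 1)) ((2:ℝ) ^ s m)) :
    volume (Set.Icc ((j : ℝ) * (2:ℝ) ^ p) (((j : ℝ) + 1) * (2:ℝ) ^ p) ∩ Istar s k (m - 1))
      = ENNReal.ofReal ((2:ℝ) ^ p) / 2 := by
  have hqp : s (m - 1) < p := by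
    have h1 := hp.1
    rwa [zpow_lt_zpow_iff_right₀ (by norm_num : (1:ℝ) < 2)] at h1
  set J := Set.Icc ((j : ℝ) * (2:ℝ) ^ p) (((j : ℝ) + 1) * (2:ℝ) ^ p) with hJdef
  set Ebad := (fun a : ℝ => a + (2:ℝ) ^ s m) '' leftEnds s k (k - m) with hEbad
  have hEnull : volume Ebad = 0 :=
    (((leftEnds_finite s k hs (show k - m ≤ k by omega)).image _)).measure_zero _
  have hEq : volume (J ∩ Istar s k (m-1)) = volume (J ∩ Hset (s (m-1))) := by
    apply le_antisymm
    · exact measure_mono (Set.inter_subset_inter_right _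
        (Istar_subset_Hset s k hs m hm1 hmk))
    · calc volume (J ∩ Hset (s (m-1)))
          ≤ volume ((J ∩ Istar s k (m-1)) ∪ Ebad) := by
            refine measure_mono ?_
            rintro x ⟨hxJ, hxH⟩
            rcases Istar_inter_Hset s k hs m hm1 hmk ⟨hJ hxJ, hxH⟩ with h | h
            · exact Or.inl ⟨hxJ, h⟩
            · exact Or.inr h
        _ ≤ volume (J ∩ Istar s k (m-1)) + volume Ebad := measure_union_le _ _
        _ = volume (J ∩ Istar s k (m-1)) := by rw [hEnull, add_zero]
  rw [hEq, volC (s (m-1)) p hqp j]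

lemma part3L (s : ℕ → ℤ) (k : ℕ) (hs : ∀ m, m < k → s m < s (m + 1))
    (m : ℕ) (hm1 : 1 ≤ m) (hmk : m ≤ k) :
    volume (Istar s k m ∩ Istar s k (m - 1)) = volume (Istar s k m) / 2 := by
  obtain ⟨T, hT⟩ := leftEnds_spec s k hs (k - m) (by omega)
  have hidx : k - (k - m) = m := by omega
  rw [hidx] at hT
  set C : ℝ := (2:ℝ) ^ (s m) with hCdef
  have hCpos : (0:ℝ) < C := c_pos _
  have hIm : Istar s k m = ⋃ n ∈ T, Set.Icc (2*(n:ℝ)*C) (2*(n:ℝ)*C + C) := by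
    rw [Istar, hT, Set.biUnion_image, ← Finset.set_biUnion_coe]
  have hdisj : (↑T : Set ℕ).PairwiseDisjoint
      (fun n : ℕ => Set.Icc (2*(n:ℝ)*C) (2*(n:ℝ)*C + C)) := by
    intro n _ n' _ hne
    have key : ∀ a b : ℕ, a < b → 2*(a:ℝ)*C + C < 2*(b:ℝ)*C := by
      intro a b hab
      have : (a:ℝ) + 1 ≤ (b:ℝ) := by exact_mod_cast hab
      nlinarith
    rcases lt_or_gt_of_ne hne with h | h
    · exact Icc_disj (key _ _ h)
    · exact (Icc_disj (key _ _ h)).symm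
  have hmeas : MeasurableSet (Istar s k (m-1)) := Istar_meas s k hs (by omega)
  have hltq : s (m - 1) < s m := by
    have h1 := hs (m-1) (by omega)
    rwa [show m - 1 + 1 = m by omega] at h1
  have hhalf : ∀ n ∈ T,
      volume (Set.Icc (2*(n:ℝ)*C) (2*(n:ℝ)*C + C) ∩ Istar s k (m-1))
        = ENNReal.ofReal C / 2 := by
    intro n hn
    have hend1 : ((2*(n:ℤ) : ℤ):ℝ) * (2:ℝ)^(s m) = 2*(n:ℝ)*C := by
      rw [hCdef]; push_cast; ring
    have hend2 : (((2*(n:ℤ) : ℤ):ℝ) + 1) * (2:ℝ)^(s m) = 2*(n:ℝ)*C + C := by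
      rw [hCdef]; push_cast; ring
    have h := part2L s k hs m hm1 hmk (2*(n:ℤ)) (s m) ?_ ?_
    · rw [hend1, hend2] at h
      exact h
    · rw [hend1, hend2, hIm]
      intro y hy
      exact Set.mem_biUnion hn hy
    · exact ⟨by rw [zpow_lt_zpow_iff_right₀ (by norm_num : (1:ℝ) < 2)]; exact hltq, le_refl _⟩
  have hvol1 : volume (Istar s k m ∩ Istar s k (m-1))
      = ∑ n ∈ T, volume (Set.Icc (2*(n:ℝ)*C) (2*(n:ℝ)*C + C) ∩ Istar s k (m-1)) := by
    rw [hIm, Set.iUnion₂_inter]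
    exact measure_biUnion_finset
      (hdisj.mono fun n => Set.inter_subset_left)
      (fun n _ => measurableSet_Icc.inter hmeas)
  have hvolm : volume (Istar s k m) = T.card • ENNReal.ofReal C := by
    rw [hIm, measure_biUnion_finset hdisj (fun n _ => measurableSet_Icc)]
    have hterm : ∀ n ∈ T, volume (Set.Icc (2*(n:ℝ)*C) (2*(n:ℝ)*C + C)) = ENNReal.ofReal C := by
      intro n _
      rw [Real.volume_Icc, show 2*(n:ℝ)*C + C - 2*(n:ℝ)*C = C by ring]
    rw [Finset.sum_congr rfl hterm, Finset.sum_const]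
  rw [hvol1, Finset.sum_congr rfl hhalf, Finset.sum_const, hvolm,
    nsmul_eq_mul, nsmul_eq_mul, mul_div_assoc]

/-- Lemma 2, parts 1) and 2): the sets `I*_m` are increasing, every dyadic interval `J`
contained in `I*_m` whose length lies in `(2^{s_{m-1}}, 2^{s_m}]` is half covered by
`I*_{m-1}`, and in particular `|I*_m ∩ I*_{m-1}| / |I*_m| = 1/2`. -/
theorem statement3 (k : ℕ) (s : ℕ → ℤ) (hs : ∀ m, m < k → s m < s (m + 1)) :
    (∀ m, m < k → Istar s k m ⊆ Istar s k (m + 1)) ∧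
    (∀ m, 1 ≤ m → m ≤ k → ∀ j p : ℤ,
      Set.Icc ((j : ℝ) * (2:ℝ) ^ p) (((j : ℝ) + 1) * (2:ℝ) ^ p) ⊆ Istar s k m →
      (2:ℝ) ^ p ∈ Set.Ioc ((2:ℝ) ^ s (m - 1)) ((2:ℝ) ^ s m) →
      volume (Set.Icc ((j : ℝ) * (2:ℝ) ^ p) (((j : ℝ) + 1) * (2:ℝ) ^ p) ∩ Istar s k (m - 1))
        = ENNReal.ofReal ((2:ℝ) ^ p) / 2) ∧
    (∀ m, 1 ≤ m → m ≤ k →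
      volume (Istar s k m ∩ Istar s k (m - 1)) = volume (Istar s k m) / 2) := by
  exact ⟨fun m hm => IstarMono s k hs m hm,
    fun m hm1 hmk j p hJ hp => part2L s k hs m hm1 hmk j p hJ hp,
    fun m hm1 hmk => part3L s k hs m hm1 hmk⟩

end
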